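/- Let K be a field and A = K[X₁,X₂,X₃,X₄]. Let α₁, α₂, α₃ be integers > 1, α₂₁ an integer with 0 < α₂₁ < α₁−1, and k a positive integer with k ≤ α₃. Let J ⊆ A be the monomial ideal generated by X₃X₄, X₁^{α₂₁}X₄, X₃^{α₃}, X₄², X₂X₄, X₂^{α₂}X₃, X₂^{kα₂+1}, and X₁^{(j−1)α₁+(j+1)α₂₁+1} X₃^{α₃−j} for j = 1, …, k−1. Then, denoting by H(n) the K-dimension of the degree-n homogeneous component of the graded ring A/J, the power series identity (1−t)⁴ · Σ_{n≥0} H(n) t^n = P(t) holds, where P(t) = 1 − 3t² + 3t³ − t⁴ − t^{α₂₁+1}(1−t)³ − t^{α₃}(1−t) − t^{α₂+1}(1−t)(1−t^{α₃−1}) − t^{kα₂+1}(1−t)² − r(t), with r(t) = 0 if k = 1 and r(t) = Σ_{j=2}^{k} t^{(k−j)α₁+(k−j+2)α₂₁+α₃+j−k}(1−t)²(1−t^{α₂}) if k > 1. -/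

import Mathlib

open MvPolynomial

/-- The Hilbert function of the graded quotient `A/J` of
`A = K[X₁,X₂,X₃,X₄]` by a homogeneous ideal `J`:
`n ↦ dim_K (A/J)_n`, realized as the dimension of the image of the space of
degree-`n` homogeneous polynomials in `A/J`. -/
noncomputable def gradedHilbert (K : Type*) [Field K]
    (J : Ideal (MvPolynomial (Fin 4) K)) (n : ℕ) : ℕ :=
  Module.finrank K
    (Submodule.map (Ideal.Quotient.mkₐ K J).toLinearMap
      (homogeneousSubmodule (Fin 4) K n))

open Finsupp

lemma fin4_decomp (d : Fin 4 →₀ ℕ) :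
    d = single 0 (d 0) + single 1 (d 1) + single 2 (d 2) + single 3 (d 3) := by
  ext i
  fin_cases i <;> simp [Finsupp.single_apply]

lemma degree_eq4 (d : Fin 4 →₀ ℕ) : d.degree = d 0 + d 1 + d 2 + d 3 := by
  rw [Finsupp.degree]
  show ∑ i ∈ d.support, d i = _
  rw [Finset.sum_subset (Finset.subset_univ d.support)
    (fun i _ hi => Finsupp.notMem_support_iff.mp hi)]
  exact Fin.sum_univ_four d

lemma pair_le_iff {i j : Fin 4} (hij : i ≠ j) (a b : ℕ) (d : Fin 4 →₀ ℕ) :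
    single i a + single j b ≤ d ↔ a ≤ d i ∧ b ≤ d j := by
  rw [Finsupp.le_def]
  constructor
  · intro h
    refine ⟨?_, ?_⟩
    · have := h i; simpa [Finsupp.single_apply, hij.symm] using this
    · have := h j; simpa [Finsupp.single_apply, hij] using this
  · rintro ⟨h1, h2⟩ x
    rcases eq_or_ne x i with rfl | hxi
    · simpa [Finsupp.single_apply, hij.symm] using h1
    · rcases eq_or_ne x j with rfl | hxj
      · simpa [Finsupp.single_apply, hij] using h2
      · simp [Finsupp.single_apply, Ne.symm hxi, Ne.symm hxj]

def AA (α₁ α₂₁ j : ℕ) : ℕ := (j-1)*α₁ + (j+1)*α₂₁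

def genSet (α₁ α₂ α₃ α₂₁ k : ℕ) : Set (Fin 4 →₀ ℕ) :=
  ({single 2 1 + single 3 1, single 0 α₂₁ + single 3 1, single 2 α₃, single 3 2,
    single 1 1 + single 3 1, single 1 α₂ + single 2 1, single 1 (k*α₂+1)} :
      Set (Fin 4 →₀ ℕ)) ∪
  {g | ∃ j : ℕ, 1 ≤ j ∧ j ≤ k - 1 ∧
     g = single 0 ((j-1)*α₁ + (j+1)*α₂₁ + 1) + single 2 (α₃ - j)}

lemma notDom_iff (α₁ α₂ α₃ α₂₁ k : ℕ) (d : Fin 4 →₀ ℕ) :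
    (∀ g ∈ genSet α₁ α₂ α₃ α₂₁ k, ¬ g ≤ d) ↔
      ((d 2 = 0 ∨ d 3 = 0) ∧ (d 0 < α₂₁ ∨ d 3 = 0) ∧ d 2 < α₃ ∧ d 3 ≤ 1 ∧
       (d 1 = 0 ∨ d 3 = 0) ∧ (d 1 < α₂ ∨ d 2 = 0) ∧ d 1 ≤ k*α₂ ∧
       ∀ j, 1 ≤ j → j ≤ k - 1 → (d 0 ≤ AA α₁ α₂₁ j ∨ d 2 < α₃ - j)) := by
  constructor
  · intro h
    have m1 := h (single 2 1 + single 3 1 : Fin 4 →₀ ℕ) (Or.inl (by simp))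
    have m2 := h (single 0 α₂₁ + single 3 1) (Or.inl (by simp))
    have m3 := h (single 2 α₃) (Or.inl (by simp))
    have m4 := h (single 3 2) (Or.inl (by simp))
    have m5 := h (single 1 1 + single 3 1) (Or.inl (by simp))
    have m6 := h (single 1 α₂ + single 2 1) (Or.inl (by simp))
    have m7 := h (single 1 (k*α₂+1)) (Or.inl (by simp))
    rw [pair_le_iff (by decide)] at m1 m2 m5 m6
    rw [Finsupp.single_le_iff] at m3 m4 m7
    refine ⟨by omega, by omega, by omega, by omega, by omega, by omega, by omega, ?_⟩
    intro j hj1 hj2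
    have := h _ (Or.inr ⟨j, hj1, hj2, rfl⟩)
    rw [pair_le_iff (by decide)] at this
    rw [AA]
    omega
  · rintro ⟨h1, h2, h3, h4, h5, h6, h7, h8⟩ g hg
    rcases hg with hg | ⟨j, hj1, hj2, rfl⟩
    · simp only [Set.mem_insert_iff, Set.mem_singleton_iff] at hg
      rcases hg with rfl | rfl | rfl | rfl | rfl | rfl | rfl
      · rw [pair_le_iff (by decide)]; omega
      · rw [pair_le_iff (by decide)]; omega
      · rw [Finsupp.single_le_iff]; omega
      · rw [Finsupp.single_le_iff]; omega
      · rw [pair_le_iff (by decide)]; omega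
      · rw [pair_le_iff (by decide)]; omega
      · rw [Finsupp.single_le_iff]; omega
    · rw [pair_le_iff (by decide)]
      have := h8 j hj1 hj2
      rw [AA] at this
      omega

noncomputable def stdF (α₁ α₂ α₃ α₂₁ k n : ℕ) : Finset (Fin 4 →₀ ℕ) :=
  (if 1 ≤ n ∧ n - 1 < α₂₁ then {single 0 (n-1) + single 3 1} else ∅)
  ∪ ((Finset.range (k*α₂+1)).filter (· ≤ n)).image (fun b => single 0 (n-b) + single 1 b)
  ∪ (Finset.Icc 1 (α₃-k)).biUnion (fun c =>
      ((Finset.range α₂).filter (fun b => c + b ≤ n)).image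
        (fun b => single 0 (n-(c+b)) + single 1 b + single 2 c))
  ∪ (Finset.Icc 1 (k-1)).biUnion (fun j =>
      ((Finset.range α₂).filter
          (fun b => (α₃-j) + b ≤ n ∧ n - ((α₃-j)+b) < AA α₁ α₂₁ j + 1)).image
        (fun b => single 0 (n-((α₃-j)+b)) + single 1 b + single 2 (α₃-j)))

lemma mem_stdF_iff (α₁ α₂ α₃ α₂₁ k : ℕ) (h₂ : 1 < α₂) (h₃ : 1 < α₃)
    (hk₀ : 0 < k) (hkα₃ : k ≤ α₃) (n : ℕ) (d : Fin 4 →₀ ℕ) :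
    d ∈ stdF α₁ α₂ α₃ α₂₁ k n ↔
      d.degree = n ∧ ∀ g ∈ genSet α₁ α₂ α₃ α₂₁ k, ¬ g ≤ d := by
  have hα₂k : α₂ ≤ k * α₂ := by
    calc α₂ = 1 * α₂ := (one_mul _).symm
    _ ≤ k * α₂ := Nat.mul_le_mul_right _ hk₀
  rw [notDom_iff, degree_eq4]
  simp only [stdF, Finset.mem_union, Finset.mem_image, Finset.mem_biUnion,
    Finset.mem_filter, Finset.mem_range, Finset.mem_Icc]
  constructor
  · rintro (((hd | ⟨b, ⟨hb1, hb2⟩, rfl⟩) | ⟨c, ⟨hc1, hc2⟩, b, ⟨hb1, hb2⟩, rfl⟩) |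
      ⟨j, ⟨hj1, hj2⟩, b, ⟨hb1, hb2, hb3⟩, rfl⟩)
    · split at hd
      · next hn =>
        rw [Finset.mem_singleton] at hd
        subst hd
        exact ⟨by simp [Finsupp.single_apply] <;> omega,
          Or.inl (by simp [Finsupp.single_apply] <;> omega),
          Or.inl (by simp [Finsupp.single_apply] <;> omega),
          by simp [Finsupp.single_apply] <;> omega,
          by simp [Finsupp.single_apply] <;> omega,
          Or.inl (by simp [Finsupp.single_apply] <;> omega),
          Or.inl (by simp [Finsupp.single_apply] <;> omega),
          by simp [Finsupp.single_apply] <;> omega,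
          fun j hj1 hj2 => Or.inr (by simp [Finsupp.single_apply] <;> omega)⟩
      · simp at hd
    · exact ⟨by simp [Finsupp.single_apply] <;> omega,
        Or.inl (by simp [Finsupp.single_apply] <;> omega),
        Or.inr (by simp [Finsupp.single_apply] <;> omega),
        by simp [Finsupp.single_apply] <;> omega,
        by simp [Finsupp.single_apply] <;> omega,
        Or.inr (by simp [Finsupp.single_apply] <;> omega),
        Or.inr (by simp [Finsupp.single_apply] <;> omega),
        by simp [Finsupp.single_apply] <;> omega,
        fun j hj1 hj2 => Or.inr (by simp [Finsupp.single_apply] <;> omega)⟩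
    · exact ⟨by simp [Finsupp.single_apply] <;> omega,
        Or.inr (by simp [Finsupp.single_apply] <;> omega),
        Or.inr (by simp [Finsupp.single_apply] <;> omega),
        by simp [Finsupp.single_apply] <;> omega,
        by simp [Finsupp.single_apply] <;> omega,
        Or.inr (by simp [Finsupp.single_apply] <;> omega),
        Or.inl (by simp [Finsupp.single_apply] <;> omega),
        by simp [Finsupp.single_apply] <;> omega,
        fun j hj1 hj2 => Or.inr (by simp [Finsupp.single_apply] <;> omega)⟩
    · refine ⟨by simp [Finsupp.single_apply] <;> omega,
        Or.inr (by simp [Finsupp.single_apply] <;> omega),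
        Or.inr (by simp [Finsupp.single_apply] <;> omega),
        by simp [Finsupp.single_apply] <;> omega,
        by simp [Finsupp.single_apply] <;> omega,
        Or.inr (by simp [Finsupp.single_apply] <;> omega),
        Or.inl (by simp [Finsupp.single_apply] <;> omega),
        by simp [Finsupp.single_apply] <;> omega, ?_⟩
      intro j' hj'1 hj'2
      rcases le_or_gt j j' with hle | hlt
      · left
        have hmono : AA α₁ α₂₁ j ≤ AA α₁ α₂₁ j' := by
          rw [AA, AA]; gcongr <;> omega
        simp [Finsupp.single_apply] <;> omega
      · right
        simp [Finsupp.single_apply] <;> omega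
  · rintro ⟨hdeg, h1, h2, h3', h4, h5, h6, h7, h8⟩
    rcases Nat.eq_zero_or_pos (d 3) with he0 | he1
    · rcases Nat.eq_zero_or_pos (d 2) with hc0 | hc1
      · left; left; right
        refine ⟨d 1, ⟨by omega, by omega⟩, ?_⟩
        ext i; fin_cases i <;> simp [Finsupp.single_apply] <;> omega
      · rcases le_or_gt (d 2) (α₃ - k) with hck | hck
        · left; right
          refine ⟨d 2, ⟨by omega, by omega⟩, d 1, ⟨by omega, by omega⟩, ?_⟩
          ext i; fin_cases i <;> simp [Finsupp.single_apply] <;> omega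
        · right
          have h8' := h8 (α₃ - d 2) (by omega) (by omega)
          have hAA : d 0 ≤ AA α₁ α₂₁ (α₃ - d 2) := by omega
          refine ⟨α₃ - d 2, ⟨by omega, by omega⟩, d 1,
            ⟨by omega, by omega, by omega⟩, ?_⟩
          have hc : α₃ - (α₃ - d 2) = d 2 := by omega
          rw [hc]
          ext i; fin_cases i <;> simp [Finsupp.single_apply] <;> omega
    · left; left; left
      rw [if_pos (by omega), Finset.mem_singleton]
      ext i; fin_cases i <;> simp [Finsupp.single_apply] <;> omega

lemma card_stdF (α₁ α₂ α₃ α₂₁ k : ℕ) (h₂ : 1 < α₂) (h₃ : 1 < α₃)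
    (hk₀ : 0 < k) (hkα₃ : k ≤ α₃) (n : ℕ) :
    (stdF α₁ α₂ α₃ α₂₁ k n).card =
      (if 1 ≤ n ∧ n - 1 < α₂₁ then 1 else 0)
      + ((Finset.range (k*α₂+1)).filter (· ≤ n)).card
      + ∑ c ∈ Finset.Icc 1 (α₃-k), ((Finset.range α₂).filter (fun b => c + b ≤ n)).card
      + ∑ j ∈ Finset.Icc 1 (k-1), ((Finset.range α₂).filter
          (fun b => (α₃-j) + b ≤ n ∧ n - ((α₃-j)+b) < AA α₁ α₂₁ j + 1)).card := by
  set P1 : Finset (Fin 4 →₀ ℕ) :=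
    (if 1 ≤ n ∧ n - 1 < α₂₁ then {single 0 (n-1) + single 3 1} else ∅) with hP1
  set P2 : Finset (Fin 4 →₀ ℕ) :=
    ((Finset.range (k*α₂+1)).filter (· ≤ n)).image
      (fun b => single 0 (n-b) + single 1 b) with hP2
  set P3 : Finset (Fin 4 →₀ ℕ) :=
    (Finset.Icc 1 (α₃-k)).biUnion (fun c =>
      ((Finset.range α₂).filter (fun b => c + b ≤ n)).image
        (fun b => single 0 (n-(c+b)) + single 1 b + single 2 c)) with hP3
  set P4 : Finset (Fin 4 →₀ ℕ) :=
    (Finset.Icc 1 (k-1)).biUnion (fun j =>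
      ((Finset.range α₂).filter
          (fun b => (α₃-j) + b ≤ n ∧ n - ((α₃-j)+b) < AA α₁ α₂₁ j + 1)).image
        (fun b => single 0 (n-((α₃-j)+b)) + single 1 b + single 2 (α₃-j))) with hP4
  have hstd : stdF α₁ α₂ α₃ α₂₁ k n = P1 ∪ P2 ∪ P3 ∪ P4 := by
    rw [stdF, hP1, hP2, hP3, hP4]
  rw [hstd]
  have f1 : ∀ d ∈ P1, d 3 = 1 := by
    intro d hd
    rw [hP1] at hd
    split at hd
    · rw [Finset.mem_singleton] at hd; subst hd; simp [Finsupp.single_apply]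
    · simp at hd
  have f2 : ∀ d ∈ P2, d 3 = 0 ∧ d 2 = 0 := by
    rintro d hd
    rw [hP2, Finset.mem_image] at hd
    obtain ⟨b, _, rfl⟩ := hd
    constructor <;> simp [Finsupp.single_apply]
  have f3 : ∀ d ∈ P3, d 3 = 0 ∧ 1 ≤ d 2 ∧ d 2 ≤ α₃ - k := by
    rintro d hd
    rw [hP3, Finset.mem_biUnion] at hd
    obtain ⟨c, hc, hd⟩ := hd
    rw [Finset.mem_Icc] at hc
    rw [Finset.mem_image] at hd
    obtain ⟨b, _, rfl⟩ := hd
    refine ⟨by simp [Finsupp.single_apply], ?_, ?_⟩ <;>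
      simp [Finsupp.single_apply] <;> omega
  have f4 : ∀ d ∈ P4, d 3 = 0 ∧ α₃ - k < d 2 := by
    rintro d hd
    rw [hP4, Finset.mem_biUnion] at hd
    obtain ⟨j, hj, hd⟩ := hd
    rw [Finset.mem_Icc] at hj
    rw [Finset.mem_image] at hd
    obtain ⟨b, _, rfl⟩ := hd
    refine ⟨by simp [Finsupp.single_apply], ?_⟩
    simp [Finsupp.single_apply]
    omega
  have d12 : Disjoint P1 P2 := by
    rw [Finset.disjoint_left]
    intro d hd hd'
    have := f1 d hd; have := f2 d hd'; omega
  have d123 : Disjoint (P1 ∪ P2) P3 := by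
    rw [Finset.disjoint_left]
    intro d hd hd'
    have h3 := f3 d hd'
    rcases Finset.mem_union.mp hd with hd1 | hd2
    · have := f1 d hd1; omega
    · have := f2 d hd2; omega
  have d1234 : Disjoint (P1 ∪ P2 ∪ P3) P4 := by
    rw [Finset.disjoint_left]
    intro d hd hd'
    have h4 := f4 d hd'
    rcases Finset.mem_union.mp hd with hd01 | hd3
    · rcases Finset.mem_union.mp hd01 with hd1 | hd2
      · have := f1 d hd1; omega
      · have := f2 d hd2; omega
    · have := f3 d hd3; omega
  rw [Finset.card_union_of_disjoint d1234, Finset.card_union_of_disjoint d123,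
      Finset.card_union_of_disjoint d12]
  congr 1
  · congr 1
    · congr 1
      · rw [hP1]
        split
        · exact Finset.card_singleton _
        · exact Finset.card_empty
      · rw [hP2, Finset.card_image_of_injOn]
        intro b _ b' _ h
        have := congrArg (fun f => f 1) h
        simpa [Finsupp.single_apply] using this
    · rw [hP3, Finset.card_biUnion]
      · refine Finset.sum_congr rfl fun c hc => ?_
        rw [Finset.card_image_of_injOn]
        intro b _ b' _ h
        have := congrArg (fun f => f 1) h
        simpa [Finsupp.single_apply] using this
      · intro c hc c' hc' hcc
        simp only [Function.onFun]
        rw [Finset.disjoint_left]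
        rintro d hd hd'
        rw [Finset.mem_image] at hd hd'
        obtain ⟨b, _, rfl⟩ := hd
        obtain ⟨b', _, h⟩ := hd'
        have := congrArg (fun f => f 2) h
        simp [Finsupp.single_apply] at this
        exact hcc this.symm
  · rw [hP4, Finset.card_biUnion]
    · refine Finset.sum_congr rfl fun j hj => ?_
      rw [Finset.card_image_of_injOn]
      intro b _ b' _ h
      have := congrArg (fun f => f 1) h
      simpa [Finsupp.single_apply] using this
    · intro j hj j' hj' hjj
      rw [Finset.mem_coe, Finset.mem_Icc] at hj hj'
      simp only [Function.onFun]
      rw [Finset.disjoint_left]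
      rintro d hd hd'
      rw [Finset.mem_image] at hd hd'
      obtain ⟨b, _, rfl⟩ := hd
      obtain ⟨b', _, h⟩ := hd'
      have := congrArg (fun f => f 2) h
      simp [Finsupp.single_apply] at this
      exact hjj (by omega)

noncomputable def psGeom (m : ℕ) : PowerSeries ℤ := ∑ i ∈ Finset.range m, PowerSeries.X ^ i
noncomputable def psOnes : PowerSeries ℤ := PowerSeries.mk fun _ => 1

lemma coeff_psGeom (m n : ℕ) :
    PowerSeries.coeff (R := ℤ) n (psGeom m) = if n < m then 1 else 0 := by
  rw [psGeom, map_sum]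
  simp only [PowerSeries.coeff_X_pow]
  rw [Finset.sum_ite_eq (Finset.range m) n (fun _ => (1:ℤ))]
  simp [Finset.mem_range]

lemma one_sub_X_mul_psGeom (m : ℕ) :
    (1 - PowerSeries.X) * psGeom m = 1 - PowerSeries.X ^ m := by
  have := geom_sum_mul (PowerSeries.X (R := ℤ)) m
  rw [psGeom]
  linear_combination -this

lemma one_sub_X_mul_psOnes : (1 - PowerSeries.X) * psOnes = 1 := by
  ext n
  rw [sub_mul, one_mul, map_sub]
  cases n with
  | zero => simp [psOnes]
  | succ n => simp [psOnes, PowerSeries.coeff_succ_X_mul]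

lemma coeff_X_mul_psGeom (m n : ℕ) :
    PowerSeries.coeff (R := ℤ) n (PowerSeries.X * psGeom m) =
      if 1 ≤ n ∧ n - 1 < m then 1 else 0 := by
  cases n with
  | zero => simp [PowerSeries.coeff_zero_X_mul]
  | succ n =>
    rw [PowerSeries.coeff_succ_X_mul, psGeom, map_sum]
    simp only [PowerSeries.coeff_X_pow]
    rw [Finset.sum_ite_eq (Finset.range m) n (fun _ => (1:ℤ))]
    simp [Finset.mem_range]

lemma coeff_psGeom_mul_psOnes (M n : ℕ) :
    PowerSeries.coeff (R := ℤ) n (psGeom M * psOnes) =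
      ∑ i ∈ Finset.range M, if i ≤ n then 1 else 0 := by
  rw [psGeom, Finset.sum_mul, map_sum]
  refine Finset.sum_congr rfl fun i _ => ?_
  rw [PowerSeries.coeff_X_pow_mul']
  simp [psOnes]

lemma coeff_Xpow_mul_psGeom_mul_psOnes (c m n : ℕ) :
    PowerSeries.coeff (R := ℤ) n (PowerSeries.X ^ c * psGeom m * psOnes) =
      ∑ b ∈ Finset.range m, if c + b ≤ n then 1 else 0 := by
  rw [psGeom, Finset.mul_sum, Finset.sum_mul, map_sum]
  refine Finset.sum_congr rfl fun b _ => ?_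
  rw [← pow_add, PowerSeries.coeff_X_pow_mul']
  split <;> simp [psOnes]

lemma coeff_Xpow_mul_psGeom_mul_psGeom (e m M n : ℕ) :
    PowerSeries.coeff (R := ℤ) n (PowerSeries.X ^ e * psGeom m * psGeom M) =
      ∑ b ∈ Finset.range m, if e + b ≤ n ∧ n - (e + b) < M then 1 else 0 := by
  rw [psGeom, Finset.mul_sum, Finset.sum_mul, map_sum]
  refine Finset.sum_congr rfl fun b _ => ?_
  rw [← pow_add, PowerSeries.coeff_X_pow_mul']
  rcases le_or_gt (e + b) n with h | h
  · rw [if_pos h, coeff_psGeom]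
    simp [h]
  · rw [if_neg (by omega), if_neg (by omega)]


lemma mk_card_eq (α₁ α₂ α₃ α₂₁ k : ℕ) (h₂ : 1 < α₂) (h₃ : 1 < α₃)
    (hk₀ : 0 < k) (hkα₃ : k ≤ α₃) :
    PowerSeries.mk (fun n => ((stdF α₁ α₂ α₃ α₂₁ k n).card : ℤ)) =
      PowerSeries.X * psGeom α₂₁ + psGeom (k*α₂+1) * psOnes
      + (∑ c ∈ Finset.Icc 1 (α₃-k), PowerSeries.X^c * psGeom α₂ * psOnes)
      + ∑ j ∈ Finset.Icc 1 (k-1),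
          PowerSeries.X^(α₃-j) * psGeom α₂ * psGeom (AA α₁ α₂₁ j + 1) := by
  ext n
  rw [PowerSeries.coeff_mk, card_stdF α₁ α₂ α₃ α₂₁ k h₂ h₃ hk₀ hkα₃ n]
  rw [map_add, map_add, map_add, map_sum, map_sum]
  push_cast
  congr 1
  · congr 1
    · congr 1
      · rw [coeff_X_mul_psGeom]
      · rw [coeff_psGeom_mul_psOnes, Finset.card_filter]
        push_cast
        rfl
    · refine Finset.sum_congr rfl fun c _ => ?_
      rw [coeff_Xpow_mul_psGeom_mul_psOnes, Finset.card_filter]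
      push_cast
      rfl
  · refine Finset.sum_congr rfl fun j _ => ?_
    rw [coeff_Xpow_mul_psGeom_mul_psGeom, Finset.card_filter]
    push_cast
    rfl

lemma sum_split (α₃ k : ℕ) (hk₀ : 0 < k) (hkα₃ : k ≤ α₃) :
    (∑ c ∈ Finset.Icc 1 (α₃-k), (PowerSeries.X : PowerSeries ℤ)^c)
      + ∑ j ∈ Finset.Icc 1 (k-1), (PowerSeries.X : PowerSeries ℤ)^(α₃-j)
    = ∑ c ∈ Finset.Icc 1 (α₃-1), (PowerSeries.X : PowerSeries ℤ)^c := by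
  have h2 : ∑ j ∈ Finset.Icc 1 (k-1), (PowerSeries.X : PowerSeries ℤ)^(α₃-j)
      = ∑ c ∈ Finset.Ioc (α₃-k) (α₃-1), (PowerSeries.X : PowerSeries ℤ)^c := by
    refine Finset.sum_nbij' (fun j => α₃ - j) (fun c => α₃ - c) ?_ ?_ ?_ ?_ ?_
    · intro j hj
      rw [Finset.mem_Icc] at hj
      rw [Finset.mem_Ioc]
      omega
    · intro c hc
      rw [Finset.mem_Ioc] at hc
      rw [Finset.mem_Icc]
      omega
    · intro j hj
      rw [Finset.mem_Icc] at hj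
      omega
    · intro c hc
      rw [Finset.mem_Ioc] at hc
      omega
    · intro j hj
      rfl
  rw [h2]
  rw [show Finset.Icc 1 (α₃-k) = Finset.Ioc 0 (α₃-k) from (by ext x; simp only [Finset.mem_Icc, Finset.mem_Ioc]; omega),
      show Finset.Icc 1 (α₃-1) = Finset.Ioc 0 (α₃-1) from (by ext x; simp only [Finset.mem_Icc, Finset.mem_Ioc]; omega)]
  exact Finset.sum_Ioc_consecutive _ (by omega) (by omega)

lemma one_sub_X_mul_sum_Icc (m : ℕ) :
    (1 - PowerSeries.X : PowerSeries ℤ) * (∑ c ∈ Finset.Icc 1 m, (PowerSeries.X : PowerSeries ℤ)^c)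
      = PowerSeries.X - PowerSeries.X^(m+1) := by
  have hins : Finset.range (m+1) = insert 0 (Finset.Icc 1 m) := by
    ext x
    simp [Finset.mem_range, Finset.mem_Icc]
    omega
  have h0 : (0:ℕ) ∉ Finset.Icc 1 m := by simp
  have : psGeom (m+1) = 1 + ∑ c ∈ Finset.Icc 1 m, (PowerSeries.X : PowerSeries ℤ)^c := by
    rw [psGeom, hins, Finset.sum_insert h0, pow_zero]
  have h2 := one_sub_X_mul_psGeom (m+1)
  rw [this] at h2
  linear_combination h2

lemma algebra_final (α₁ α₂ α₃ α₂₁ k : ℕ) (h₂ : 1 < α₂) (h₃ : 1 < α₃)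
    (hk₀ : 0 < k) (hkα₃ : k ≤ α₃) :
    (1 - PowerSeries.X : PowerSeries ℤ) ^ 4 *
      (PowerSeries.X * psGeom α₂₁ + psGeom (k*α₂+1) * psOnes
      + (∑ c ∈ Finset.Icc 1 (α₃-k), PowerSeries.X^c * psGeom α₂ * psOnes)
      + ∑ j ∈ Finset.Icc 1 (k-1),
          PowerSeries.X^(α₃-j) * psGeom α₂ * psGeom (AA α₁ α₂₁ j + 1)) =
      1 - 3 * PowerSeries.X ^ 2 + 3 * PowerSeries.X ^ 3 - PowerSeries.X ^ 4
        - PowerSeries.X ^ (α₂₁ + 1) * (1 - PowerSeries.X) ^ 3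
        - PowerSeries.X ^ α₃ * (1 - PowerSeries.X)
        - PowerSeries.X ^ (α₂ + 1) * (1 - PowerSeries.X) *
            (1 - PowerSeries.X ^ (α₃ - 1))
        - PowerSeries.X ^ (k * α₂ + 1) * (1 - PowerSeries.X) ^ 2
        - ∑ j ∈ Finset.Icc 2 k,
            PowerSeries.X ^ ((k - j) * α₁ + (k - j + 2) * α₂₁ + α₃ + j - k) *
              (1 - PowerSeries.X) ^ 2 * (1 - PowerSeries.X ^ α₂) := by
  have T1 : (1 - PowerSeries.X : PowerSeries ℤ)^4 * (PowerSeries.X * psGeom α₂₁)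
      = PowerSeries.X * (1-PowerSeries.X)^3 * (1 - PowerSeries.X^α₂₁) := by
    calc (1 - PowerSeries.X : PowerSeries ℤ)^4 * (PowerSeries.X * psGeom α₂₁)
        = PowerSeries.X * (1-PowerSeries.X)^3 * ((1-PowerSeries.X) * psGeom α₂₁) := by ring
      _ = _ := by rw [one_sub_X_mul_psGeom]
  have T2 : (1 - PowerSeries.X : PowerSeries ℤ)^4 * (psGeom (k*α₂+1) * psOnes)
      = (1-PowerSeries.X)^2 * (1 - PowerSeries.X^(k*α₂+1)) := by
    calc (1 - PowerSeries.X : PowerSeries ℤ)^4 * (psGeom (k*α₂+1) * psOnes)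
        = (1-PowerSeries.X)^2 * ((1-PowerSeries.X) * psGeom (k*α₂+1))
            * ((1-PowerSeries.X) * psOnes) := by ring
      _ = _ := by rw [one_sub_X_mul_psGeom, one_sub_X_mul_psOnes, mul_one]
  have T3 : ∀ c : ℕ, (1 - PowerSeries.X : PowerSeries ℤ)^4 *
      (PowerSeries.X^c * psGeom α₂ * psOnes)
      = PowerSeries.X^c * ((1-PowerSeries.X)^2 * (1 - PowerSeries.X^α₂)) := by
    intro c
    calc (1 - PowerSeries.X : PowerSeries ℤ)^4 * (PowerSeries.X^c * psGeom α₂ * psOnes)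
        = PowerSeries.X^c * (1-PowerSeries.X)^2 * ((1-PowerSeries.X) * psGeom α₂)
            * ((1-PowerSeries.X) * psOnes) := by ring
      _ = _ := by rw [one_sub_X_mul_psGeom, one_sub_X_mul_psOnes, mul_one]; ring
  have T4 : ∀ e M : ℕ, (1 - PowerSeries.X : PowerSeries ℤ)^4 *
      (PowerSeries.X^e * psGeom α₂ * psGeom M)
      = PowerSeries.X^e * ((1-PowerSeries.X)^2 * (1 - PowerSeries.X^α₂))
        - PowerSeries.X^(e+M) * ((1-PowerSeries.X)^2 * (1 - PowerSeries.X^α₂)) := by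
    intro e M
    calc (1 - PowerSeries.X : PowerSeries ℤ)^4 * (PowerSeries.X^e * psGeom α₂ * psGeom M)
        = PowerSeries.X^e * (1-PowerSeries.X)^2 * ((1-PowerSeries.X) * psGeom α₂)
            * ((1-PowerSeries.X) * psGeom M) := by ring
      _ = PowerSeries.X^e * (1-PowerSeries.X)^2 * (1 - PowerSeries.X^α₂)
            * (1 - PowerSeries.X^M) := by rw [one_sub_X_mul_psGeom, one_sub_X_mul_psGeom]
      _ = _ := by rw [pow_add]; ring
  rw [mul_add, mul_add, mul_add, T1, T2, Finset.mul_sum, Finset.mul_sum]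
  simp only [T3, T4]
  rw [Finset.sum_sub_distrib, ← Finset.sum_mul, ← Finset.sum_mul, ← Finset.sum_mul]
  have hsplit := sum_split α₃ k hk₀ hkα₃
  have hcomb :
      (∑ c ∈ Finset.Icc 1 (α₃-k), (PowerSeries.X : PowerSeries ℤ)^c) *
          ((1-PowerSeries.X)^2 * (1 - PowerSeries.X^α₂))
        + (∑ j ∈ Finset.Icc 1 (k-1), (PowerSeries.X : PowerSeries ℤ)^(α₃-j)) *
          ((1-PowerSeries.X)^2 * (1 - PowerSeries.X^α₂))
      = (∑ c ∈ Finset.Icc 1 (α₃-1), (PowerSeries.X : PowerSeries ℤ)^c) *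
          ((1-PowerSeries.X)^2 * (1 - PowerSeries.X^α₂)) := by
    rw [← add_mul, hsplit]
  have Tres : (∑ j ∈ Finset.Icc 1 (k-1),
        (PowerSeries.X : PowerSeries ℤ)^(α₃-j+(AA α₁ α₂₁ j+1))) *
          ((1-PowerSeries.X)^2 * (1 - PowerSeries.X^α₂))
      = ∑ j ∈ Finset.Icc 2 k,
          PowerSeries.X ^ ((k - j) * α₁ + (k - j + 2) * α₂₁ + α₃ + j - k) *
            (1 - PowerSeries.X) ^ 2 * (1 - PowerSeries.X ^ α₂) := by
    rw [Finset.sum_mul]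
    refine Finset.sum_nbij' (fun j => k+1-j) (fun j => k+1-j) ?_ ?_ ?_ ?_ ?_
    · intro j hj
      rw [Finset.mem_Icc] at hj
      rw [Finset.mem_Icc]
      omega
    · intro j hj
      rw [Finset.mem_Icc] at hj
      rw [Finset.mem_Icc]
      omega
    · intro j hj
      rw [Finset.mem_Icc] at hj
      omega
    · intro j hj
      rw [Finset.mem_Icc] at hj
      omega
    · intro j hj
      rw [Finset.mem_Icc] at hj
      have hexp : (k - (k+1-j)) * α₁ + (k - (k+1-j) + 2) * α₂₁ + α₃ + (k+1-j) - k
          = α₃ - j + (AA α₁ α₂₁ j + 1) := by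
        have h1 : k - (k+1-j) = j - 1 := by omega
        rw [h1, AA]
        have h2 : j - 1 + 2 = j + 1 := by omega
        rw [h2]
        set C := (j-1)*α₁ with hC
        set D := (j+1)*α₂₁ with hD
        omega
      rw [hexp]
      ring
  have Tsum := one_sub_X_mul_sum_Icc (α₃ - 1)
  rw [show α₃ - 1 + 1 = α₃ by omega] at Tsum
  have hY : (PowerSeries.X : PowerSeries ℤ)^α₃ = PowerSeries.X^(α₃-1) * PowerSeries.X := by
    rw [← pow_succ]
    congr 1
    omega
  have ha : (PowerSeries.X : PowerSeries ℤ)^(α₂₁+1) = PowerSeries.X^α₂₁ * PowerSeries.X :=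
    pow_succ _ _
  have hb : (PowerSeries.X : PowerSeries ℤ)^(α₂+1) = PowerSeries.X^α₂ * PowerSeries.X :=
    pow_succ _ _
  rw [hY] at Tsum
  rw [← Tres, hY, ha, hb]
  linear_combination hcomb + ((1:PowerSeries ℤ) - PowerSeries.X) * (1 - PowerSeries.X^α₂) * Tsum

open MvPolynomial in
lemma image_genSet (K : Type*) [Field K] (α₁ α₂ α₃ α₂₁ k : ℕ) :
    (fun s => monomial s (1:K)) '' genSet α₁ α₂ α₃ α₂₁ k =
      ({X 2 * X 3, X 0 ^ α₂₁ * X 3, X 2 ^ α₃, X 3 ^ 2, X 1 * X 3, X 1 ^ α₂ * X 2,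
        X 1 ^ (k * α₂ + 1)} : Set (MvPolynomial (Fin 4) K)) ∪
      {g | ∃ j : ℕ, 1 ≤ j ∧ j ≤ k - 1 ∧
        g = X 0 ^ ((j - 1) * α₁ + (j + 1) * α₂₁ + 1) * X 2 ^ (α₃ - j)} := by
  have key : ∀ (i j : Fin 4) (a b : ℕ),
      (X i ^ a * X j ^ b : MvPolynomial (Fin 4) K)
        = monomial (single i a + single j b) 1 := by
    intro i j a b
    rw [X_pow_eq_monomial, X_pow_eq_monomial, monomial_mul, one_mul]
  have key1 : ∀ (i : Fin 4) (a : ℕ),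
      (X i ^ a : MvPolynomial (Fin 4) K) = monomial (single i a) 1 := fun i a =>
    X_pow_eq_monomial
  rw [genSet, Set.image_union]
  congr 1
  · simp only [Set.image_insert_eq, Set.image_singleton]
    rw [show (monomial (single (2:Fin 4) 1 + single 3 1) (1:K)) = X 2 * X 3 by
        rw [← pow_one (X (2:Fin 4)), ← pow_one (X (3:Fin 4)), key],
      show (monomial (single (0:Fin 4) α₂₁ + single 3 1) (1:K)) = X 0 ^ α₂₁ * X 3 by
        rw [← pow_one (X (3:Fin 4)), key],
      show (monomial (single (2:Fin 4) α₃) (1:K)) = X 2 ^ α₃ from (key1 _ _).symm,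
      show (monomial (single (3:Fin 4) 2) (1:K)) = X 3 ^ 2 from (key1 _ _).symm,
      show (monomial (single (1:Fin 4) 1 + single 3 1) (1:K)) = X 1 * X 3 by
        rw [← pow_one (X (1:Fin 4)), ← pow_one (X (3:Fin 4)), key],
      show (monomial (single (1:Fin 4) α₂ + single 2 1) (1:K)) = X 1 ^ α₂ * X 2 by
        rw [← pow_one (X (2:Fin 4)), key],
      show (monomial (single (1:Fin 4) (k*α₂+1)) (1:K)) = X 1 ^ (k*α₂+1) from
        (key1 _ _).symm]
  · ext g
    simp only [Set.mem_image, Set.mem_setOf_eq]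
    constructor
    · rintro ⟨s, ⟨j, hj1, hj2, rfl⟩, rfl⟩
      exact ⟨j, hj1, hj2, by rw [key]⟩
    · rintro ⟨j, hj1, hj2, rfl⟩
      exact ⟨single 0 ((j-1)*α₁+(j+1)*α₂₁+1) + single 2 (α₃-j),
        ⟨j, hj1, hj2, rfl⟩, by rw [key]⟩

theorem gradedHilbert_eq_card (K : Type*) [Field K] (S : Set (Fin 4 →₀ ℕ))
    (J : Ideal (MvPolynomial (Fin 4) K))
    (hJ : J = Ideal.span ((fun s => monomial s (1:K)) '' S))
    (n : ℕ) (B : Finset (Fin 4 →₀ ℕ))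
    (hB : ∀ d : Fin 4 →₀ ℕ, d ∈ B ↔ d.degree = n ∧ ∀ g ∈ S, ¬ g ≤ d) :
    gradedHilbert K J n = B.card := by
  classical
  set q := (Ideal.Quotient.mkₐ K J).toLinearMap with hq
  have hq0 : ∀ p : MvPolynomial (Fin 4) K, p ∈ J → q p = 0 := fun p hp =>
    Ideal.Quotient.eq_zero_iff_mem.mpr hp
  have hmem : ∀ p : MvPolynomial (Fin 4) K, p ∈ J ↔ ∀ d ∈ p.support, ∃ g ∈ S, g ≤ d := by
    intro p; rw [hJ]; exact mem_ideal_span_monomial_image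
  have hspan : Submodule.map q (homogeneousSubmodule (Fin 4) K n)
      = Submodule.span K (Set.range (fun d : B => q (monomial (d : Fin 4 →₀ ℕ) 1))) := by
    apply le_antisymm
    · rintro _ ⟨p, hp, rfl⟩
      have hp' : IsHomogeneous p n := hp
      have hrw : q p = ∑ d ∈ p.support, q (monomial d (coeff d p)) := by
        rw [← map_sum, support_sum_monomial_coeff p]
      rw [hrw]
      refine Submodule.sum_mem _ ?_
      intro d hd
      by_cases hdB : d ∈ B
      · have : q (monomial d (coeff d p)) = coeff d p • q (monomial d 1) := by
          rw [← map_smul]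
          congr 1
          rw [smul_monomial, smul_eq_mul, mul_one]
        rw [this]
        exact Submodule.smul_mem _ _ (Submodule.subset_span ⟨⟨d, hdB⟩, rfl⟩)
      · have hdeg : d.degree = n := by
          rw [Finsupp.degree_eq_weight_one]
          exact hp' (MvPolynomial.mem_support_iff.mp hd)
        have : ∃ g ∈ S, g ≤ d := by
          by_contra hcon
          push_neg at hcon
          exact hdB ((hB d).mpr ⟨hdeg, hcon⟩)
        have hJd : monomial d (coeff d p) ∈ J := by
          rw [hmem]
          intro d' hd'
          rcases Finset.mem_singleton.mp (support_monomial_subset hd') with rfl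
          exact this
        rw [hq0 _ hJd]
        exact Submodule.zero_mem _
    · rw [Submodule.span_le]
      rintro _ ⟨⟨d, hdB⟩, rfl⟩
      exact ⟨monomial d 1, (mem_homogeneousSubmodule _ _).mpr
        (isHomogeneous_monomial 1 ((hB d).mp hdB).1), rfl⟩
  have hli : LinearIndependent K (fun d : B => q (monomial (d : Fin 4 →₀ ℕ) 1)) := by
    rw [linearIndependent_iff']
    intro s g hsum i hi
    by_contra hgi
    have hmon : ∀ j : B, g j • monomial (j : Fin 4 →₀ ℕ) (1:K) = monomial (j : Fin 4 →₀ ℕ) (g j) := by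
      intro j; rw [smul_monomial, smul_eq_mul, mul_one]
    have hqsum : q (∑ j ∈ s, monomial (j : Fin 4 →₀ ℕ) (g j)) = 0 := by
      rw [map_sum, ← hsum]
      exact Finset.sum_congr rfl fun j _ => by rw [← hmon j, map_smul]
    have hpJ : (∑ j ∈ s, monomial (j : Fin 4 →₀ ℕ) (g j)) ∈ J := by
      exact Ideal.Quotient.eq_zero_iff_mem.mp hqsum
    have hcoeff : coeff (i : Fin 4 →₀ ℕ) (∑ j ∈ s, monomial (j : Fin 4 →₀ ℕ) (g j)) = g i := by
      rw [coeff_sum]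
      rw [Finset.sum_eq_single i]
      · rw [coeff_monomial, if_pos rfl]
      · intro j _ hji
        rw [coeff_monomial, if_neg (fun h => hji (Subtype.coe_injective h))]
      · intro h; exact absurd hi h
    have hsupp : (i : Fin 4 →₀ ℕ) ∈ (∑ j ∈ s, monomial (j : Fin 4 →₀ ℕ) (g j)).support := by
      rw [MvPolynomial.mem_support_iff, hcoeff]; exact hgi
    obtain ⟨g', hg'S, hg'le⟩ := (hmem _).mp hpJ _ hsupp
    exact ((hB i).mp i.2).2 g' hg'S hg'le
  rw [gradedHilbert, ← hq, hspan, finrank_span_eq_card hli, Fintype.card_coe]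

/-- First Hilbert series of the monomial ideal arising as the tangent cone ideal of a
4-generated pseudo-symmetric monomial curve with `α₄ = 2`.
(Variables: `X 0 = X₁`, `X 1 = X₂`, `X 2 = X₃`, `X 3 = X₄`.) -/
theorem stmt8 (K : Type*) [Field K] (α₁ α₂ α₃ α₂₁ k : ℕ)
    (h₁ : 1 < α₁) (h₂ : 1 < α₂) (h₃ : 1 < α₃)
    (h₂₁ : 0 < α₂₁) (h₂₁' : α₂₁ < α₁ - 1)
    (hk₀ : 0 < k) (hkα₃ : k ≤ α₃)
    (J : Ideal (MvPolynomial (Fin 4) K))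
    (hJ : J = Ideal.span (({X 2 * X 3,
                            X 0 ^ α₂₁ * X 3,
                            X 2 ^ α₃,
                            X 3 ^ 2,
                            X 1 * X 3,
                            X 1 ^ α₂ * X 2,
                            X 1 ^ (k * α₂ + 1)} :
          Set (MvPolynomial (Fin 4) K)) ∪
        {g | ∃ j : ℕ, 1 ≤ j ∧ j ≤ k - 1 ∧
          g = X 0 ^ ((j - 1) * α₁ + (j + 1) * α₂₁ + 1) * X 2 ^ (α₃ - j)})) :
    (1 - PowerSeries.X : PowerSeries ℤ) ^ 4 *
        PowerSeries.mk (fun n => (gradedHilbert K J n : ℤ)) =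
      1 - 3 * PowerSeries.X ^ 2 + 3 * PowerSeries.X ^ 3 - PowerSeries.X ^ 4
        - PowerSeries.X ^ (α₂₁ + 1) * (1 - PowerSeries.X) ^ 3
        - PowerSeries.X ^ α₃ * (1 - PowerSeries.X)
        - PowerSeries.X ^ (α₂ + 1) * (1 - PowerSeries.X) *
            (1 - PowerSeries.X ^ (α₃ - 1))
        - PowerSeries.X ^ (k * α₂ + 1) * (1 - PowerSeries.X) ^ 2
        - ∑ j ∈ Finset.Icc 2 k,
            PowerSeries.X ^ ((k - j) * α₁ + (k - j + 2) * α₂₁ + α₃ + j - k) *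
              (1 - PowerSeries.X) ^ 2 * (1 - PowerSeries.X ^ α₂) := by
  have hJ2 : J = Ideal.span ((fun s => monomial s (1:K)) '' genSet α₁ α₂ α₃ α₂₁ k) := by
    rw [hJ, image_genSet]
  have hcard : ∀ n, gradedHilbert K J n = (stdF α₁ α₂ α₃ α₂₁ k n).card := fun n =>
    gradedHilbert_eq_card K (genSet α₁ α₂ α₃ α₂₁ k) J hJ2 n (stdF α₁ α₂ α₃ α₂₁ k n)
      (fun d => mem_stdF_iff α₁ α₂ α₃ α₂₁ k h₂ h₃ hk₀ hkα₃ n d)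
  have hmk : PowerSeries.mk (fun n => (gradedHilbert K J n : ℤ))
      = PowerSeries.mk (fun n => ((stdF α₁ α₂ α₃ α₂₁ k n).card : ℤ)) := by
    ext n
    simp only [PowerSeries.coeff_mk, hcard]
  rw [hmk, mk_card_eq α₁ α₂ α₃ α₂₁ k h₂ h₃ hk₀ hkα₃]
  exact algebra_final α₁ α₂ α₃ α₂₁ k h₂ h₃ hk₀ hkα₃
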